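/- arXiv:2505.24668 — 2 statements merged into one kernel-verified Lean document; each statement's English description precedes it below -/
import Mathlib

section
/- Residue formula for eigenvector alignment: Let B ∈ ℝ^{d×d} symmetric, λ₁ > 0, u a unit vector, S = B + λ₁ u uᵀ. Let ν be a simple eigenvalue of S that is not an eigenvalue of B, with unit eigenvector w. Define f(α) := uᵀ (B - α I)⁻¹ u. Then ⟨u, w⟩² = 1 / (λ₁² f'(ν)), where f'(ν) = uᵀ (B - ν I)⁻² u. -/
open Matrix

lemma stmt15_aux {d : ℕ} (A : Matrix (Fin d) (Fin d) ℝ) (x y : Fin d → ℝ) :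
    (A *ᵥ x) ⬝ᵥ y = x ⬝ᵥ (Aᵀ *ᵥ y) := by
  rw [dotProduct_comm, dotProduct_mulVec, ← mulVec_transpose]
  exact dotProduct_comm _ _

/-- Residue formula for eigenvector alignment: for a simple eigenvalue `ν` of
`S = B + λ₁ u uᵀ` that is not an eigenvalue of `B`, with unit eigenvector `w`,
`⟨u, w⟩² = 1 / (λ₁² f'(ν))` where `f'(ν) = uᵀ (B - ν I)⁻² u`. -/
theorem stmt15 {d : ℕ} (B : Matrix (Fin d) (Fin d) ℝ) (hB : Bᵀ = B)
    (lam : ℝ) (hlam : 0 < lam) (u : Fin d → ℝ) (hu : ∑ i, u i ^ 2 = 1)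
    (S : Matrix (Fin d) (Fin d) ℝ) (hS : S = B + lam • vecMulVec u u)
    (ν : ℝ) (w : Fin d → ℝ) (hw : ∑ i, w i ^ 2 = 1) (hew : S *ᵥ w = ν • w)
    (hsimple : ∀ w' : Fin d → ℝ, S *ᵥ w' = ν • w' → ∃ c : ℝ, w' = c • w)
    (hnotB : IsUnit (B - ν • (1 : Matrix (Fin d) (Fin d) ℝ)).det) :
    (u ⬝ᵥ w) ^ 2 =
      1 / (lam ^ 2 *
        (u ⬝ᵥ (((B - ν • (1 : Matrix (Fin d) (Fin d) ℝ))⁻¹ *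
          (B - ν • (1 : Matrix (Fin d) (Fin d) ℝ))⁻¹) *ᵥ u))) := by
  set M := B - ν • (1 : Matrix (Fin d) (Fin d) ℝ) with hMdef
  have hMT : Mᵀ = M := by
    simp [hMdef, transpose_sub, transpose_smul, hB]
  have hMinv : M⁻¹ * M = 1 := nonsing_inv_mul M hnotB
  set c := u ⬝ᵥ w with hc
  have hvv : (vecMulVec u u) *ᵥ w = c • u := by
    funext i
    simp only [mulVec, vecMulVec, dotProduct, of_apply, Pi.smul_apply, smul_eq_mul, hc]
    rw [Finset.sum_mul]
    exact Finset.sum_congr rfl fun j _ => by ring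
  have hMw : M *ᵥ w = (-(lam * c)) • u := by
    have h0 : (B + lam • vecMulVec u u) *ᵥ w = ν • w := by rw [← hS]; exact hew
    have h1 : B *ᵥ w + (lam * c) • u = ν • w := by
      rw [← h0]; simp [add_mulVec, smul_mulVec, hvv, smul_smul]
    have h2 : M *ᵥ w = B *ᵥ w - ν • w := by
      simp [hMdef, sub_mulVec, smul_mulVec, one_mulVec]
    rw [h2, ← h1]
    funext i; simp
  have hw' : w = (-(lam * c)) • (M⁻¹ *ᵥ u) := by
    have h3 : M⁻¹ *ᵥ (M *ᵥ w) = w := by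
      rw [mulVec_mulVec, hMinv, one_mulVec]
    rw [← h3, hMw, mulVec_smul]
  have hc0 : c ≠ 0 := by
    intro h
    have hw0 : w = 0 := by
      have hMw0 : M *ᵥ w = 0 := by rw [hMw, h]; simp
      have := congrArg (fun v => M⁻¹ *ᵥ v) hMw0
      simpa [mulVec_mulVec, hMinv] using this
    rw [hw0] at hw
    simp at hw
  have hww : w ⬝ᵥ w = 1 := by
    simpa [dotProduct, pow_two] using hw
  have htr : (M⁻¹)ᵀ = M⁻¹ := by rw [transpose_nonsing_inv, hMT]
  have h2 : (M⁻¹ *ᵥ u) ⬝ᵥ (M⁻¹ *ᵥ u) = u ⬝ᵥ ((M⁻¹ * M⁻¹) *ᵥ u) := by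
    rw [stmt15_aux, htr, mulVec_mulVec]
  have key : (lam * c) ^ 2 * (u ⬝ᵥ ((M⁻¹ * M⁻¹) *ᵥ u)) = 1 := by
    have h4 := hww
    rw [hw', smul_dotProduct, dotProduct_smul, smul_eq_mul, smul_eq_mul] at h4
    rw [← h2]
    linear_combination h4
  set q := u ⬝ᵥ ((M⁻¹ * M⁻¹) *ᵥ u) with hq
  have hq0 : lam ^ 2 * q ≠ 0 := by
    intro h
    rw [show (lam * c) ^ 2 * q = c ^ 2 * (lam ^ 2 * q) by ring, h] at key
    simp at key
  field_simp
  rw [eq_div_iff (right_ne_zero_of_mul hq0)]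
  nlinarith [key]
end

section
/- Frobenius norm of projected pseudoinverse solution: Let Y, Z ∈ ℝ^{d×n} with Z of full column rank n, Z = Ū D̄ V̄ᵀ its reduced SVD with squared singular values λ̄_j, and Y = U_Y D_Y V_Yᵀ with squared singular values λ_i and right singular vectors v_i. Then for W = P_k(Y) Z⁺, we have ‖W‖_F² = Σ_{j=1}^n λ̄_j⁻¹ Σ_{i=1}^k λ_i (v_iᵀ v̄_j)², where v̄_j are the right singular vectors of Z. -/
open Matrix

/-- Squared Frobenius norm. -/
noncomputable def frobSq {d n : ℕ} (M : Matrix (Fin d) (Fin n) ℝ) : ℝ :=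
  ∑ i, ∑ j, (M i j) ^ 2

/-- Rectangular diagonal matrix. -/
noncomputable def rectDiag (d n : ℕ) (f : Fin n → ℝ) : Matrix (Fin d) (Fin n) ℝ :=
  Matrix.of fun i j => if (i : ℕ) = (j : ℕ) then f j else 0

lemma frobSq_eq_trace {d n : ℕ} (M : Matrix (Fin d) (Fin n) ℝ) :
    frobSq M = (Mᵀ * M).trace := by
  simp only [frobSq, Matrix.trace, Matrix.diag, Matrix.mul_apply,
    Matrix.transpose_apply, pow_two]
  exact Finset.sum_comm

lemma frobSq_mul_left {m d n : ℕ} (U : Matrix (Fin m) (Fin d) ℝ) (hU : Uᵀ * U = 1)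
    (A : Matrix (Fin d) (Fin n) ℝ) : frobSq (U * A) = frobSq A := by
  rw [frobSq_eq_trace, frobSq_eq_trace (M := A), Matrix.transpose_mul,
    Matrix.mul_assoc, ← Matrix.mul_assoc Uᵀ U A, hU, Matrix.one_mul]

lemma frobSq_transpose {d n : ℕ} (M : Matrix (Fin d) (Fin n) ℝ) : frobSq Mᵀ = frobSq M := by
  simp only [frobSq, Matrix.transpose_apply]
  exact Finset.sum_comm

lemma sum_fin_cast {d n : ℕ} (hn : n ≤ d) (g : Fin d → ℝ)
    (hg : ∀ i : Fin d, n ≤ (i : ℕ) → g i = 0) :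
    ∑ i : Fin d, g i = ∑ i : Fin n, g (Fin.castLE hn i) := by
  classical
  set F : ℕ → ℝ := fun m => if h : m < d then g ⟨m, h⟩ else 0 with hF
  have h1 : ∑ i : Fin d, g i = ∑ i ∈ Finset.range d, F i := by
    rw [← Fin.sum_univ_eq_sum_range]
    exact Finset.sum_congr rfl (fun i _ => by simp [hF, i.isLt])
  have h2 : ∑ i ∈ Finset.range d, F i = ∑ i ∈ Finset.range n, F i := by
    refine (Finset.sum_subset (Finset.range_subset_range.mpr hn) ?_).symm
    intro x hx hx'
    simp only [Finset.mem_range] at hx hx'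
    simp [hF, hx, hg ⟨x, hx⟩ (le_of_not_gt hx')]
  rw [h1, h2, ← Fin.sum_univ_eq_sum_range]
  refine Finset.sum_congr rfl (fun i _ => ?_)
  simp only [hF, dif_pos (lt_of_lt_of_le i.isLt hn)]
  exact congrArg g (Fin.ext rfl)

/-- Frobenius norm of the projected pseudoinverse solution `W = P_k(Y) Z⁺`:
`‖W‖_F² = Σ_j λ̄_j⁻¹ Σ_{i<k} λ_i (vᵢᵀ v̄_j)²`. -/
theorem stmt17 {d n k : ℕ} (hn : n ≤ d) (hk : k ≤ n)
    (Z Y : Matrix (Fin d) (Fin n) ℝ)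
    (Ub : Matrix (Fin d) (Fin n) ℝ) (hUb : Ubᵀ * Ub = 1)
    (Vb : Matrix (Fin n) (Fin n) ℝ) (hVb : Vbᵀ * Vb = 1)
    (sb : Fin n → ℝ) (hsb : ∀ j, 0 < sb j)
    (hZ : Z = Ub * Matrix.diagonal sb * Vbᵀ)
    (UY : Matrix (Fin d) (Fin d) ℝ) (hUY : UYᵀ * UY = 1)
    (VY : Matrix (Fin n) (Fin n) ℝ) (hVY : VYᵀ * VY = 1)
    (s : Fin n → ℝ) (hs : ∀ j, 0 ≤ s j)
    (hY : Y = UY * rectDiag d n s * VYᵀ)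
    (W : Matrix (Fin d) (Fin d) ℝ)
    (hW : W = (UY * rectDiag d n (fun i => if (i : ℕ) < k then s i else 0) * VYᵀ) *
      (Vb * (Matrix.diagonal sb)⁻¹ * Ubᵀ)) :
    frobSq W = ∑ j : Fin n, (sb j ^ 2)⁻¹ *
      ∑ i : Fin n, (if (i : ℕ) < k then
        s i ^ 2 * ((fun l => VY l i) ⬝ᵥ (fun l => Vb l j)) ^ 2 else 0) := by
  classical
  have hsb0 : ∀ j, sb j ≠ 0 := fun j => (hsb j).ne'
  have hdiag : (Matrix.diagonal sb)⁻¹ = Matrix.diagonal (fun j => (sb j)⁻¹) := by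
    apply Matrix.inv_eq_right_inv
    rw [Matrix.diagonal_mul_diagonal]
    have : (fun j => sb j * (sb j)⁻¹) = fun _ => (1 : ℝ) := by
      funext j; exact mul_inv_cancel₀ (hsb0 j)
    rw [this, Matrix.diagonal_one]
  set sk : Fin n → ℝ := fun i => if (i : ℕ) < k then s i else 0 with hsk
  set C : Matrix (Fin n) (Fin n) ℝ := VYᵀ * Vb * Matrix.diagonal (fun j => (sb j)⁻¹)
    with hCdef
  set A : Matrix (Fin d) (Fin n) ℝ := rectDiag d n sk * C with hAdef
  have hW2 : W = UY * (A * Ubᵀ) := by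
    rw [hW, hdiag]
    simp only [hAdef, hCdef, Matrix.mul_assoc]
  have h1 : frobSq W = frobSq A := by
    rw [hW2, frobSq_mul_left UY hUY, ← frobSq_transpose, Matrix.transpose_mul,
      Matrix.transpose_transpose, frobSq_mul_left Ub hUb, frobSq_transpose]
  have hC : ∀ (i j : Fin n), C i j =
      ((fun l => VY l i) ⬝ᵥ (fun l => Vb l j)) * (sb j)⁻¹ := by
    intro i j
    rw [hCdef, Matrix.mul_diagonal]
    simp [Matrix.mul_apply, dotProduct]
  have hA : ∀ (i j : Fin n), A (Fin.castLE hn i) j = sk i * C i j := by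
    intro i j
    rw [hAdef, Matrix.mul_apply]
    have : ∀ l : Fin n, rectDiag d n sk (Fin.castLE hn i) l * C l j =
        if i = l then sk l * C l j else 0 := by
      intro l
      simp only [rectDiag, Matrix.of_apply, Fin.coe_castLE]
      by_cases h : i = l
      · simp [h]
      · rw [if_neg (fun hc => h (Fin.ext hc)), if_neg h, zero_mul]
    simp [this]
  have hA0 : ∀ (i : Fin d), n ≤ (i : ℕ) → ∀ j, A i j = 0 := by
    intro i hi j
    rw [hAdef, Matrix.mul_apply]
    apply Finset.sum_eq_zero
    intro l _
    have : (i : ℕ) ≠ (l : ℕ) := by omega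
    simp [rectDiag, this]
  rw [h1]
  unfold frobSq
  rw [sum_fin_cast hn _ (fun i hi => Finset.sum_eq_zero fun j _ => by
    rw [hA0 i hi j]; ring)]
  rw [Finset.sum_comm]
  refine Finset.sum_congr rfl fun j _ => ?_
  rw [Finset.mul_sum]
  refine Finset.sum_congr rfl fun i _ => ?_
  rw [hA i j, hC i j, hsk]
  by_cases h : (i : ℕ) < k
  · simp only [h, if_true]
    have : sb j ≠ 0 := hsb0 j
    field_simp
  · simp [h]
end
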